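/- If H is a Hilbert space with dim H ≥ 2, then the real linear span of the set of orthogonal projections on H is dense in B_s(H) with respect to the operator norm. -/

import Mathlib

namespace ProjectionSpanAux

open ContinuousLinearMap RCLike
open scoped InnerProductSpace

variable {H : Type*} [NormedAddCommGroup H] [InnerProductSpace ℂ H] [CompleteSpace H]

noncomputable def aop (A : H →L[ℂ] H) (t : ℝ) : H →L[ℂ] H :=
  cfc (fun r : ℝ => max (r - t) 0) A

lemma aop_sub (A : H →L[ℂ] H) (hA : IsSelfAdjoint A) (t : ℝ) :
    aop A t - cfc (fun r : ℝ => max (t - r) 0) A = A - algebraMap ℝ (H →L[ℂ] H) t := by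
  rw [aop, ← cfc_sub ..]
  have h : (fun r : ℝ => max (r - t) 0 - max (t - r) 0) = fun r : ℝ => r - t := by
    ext r
    rcases le_total r t with h | h
    · simp [max_eq_left, max_eq_right, sub_nonpos.2 h, sub_nonneg.2 h]
    · simp [max_eq_left, max_eq_right, sub_nonpos.2 h, sub_nonneg.2 h]
  rw [h, cfc_sub .., cfc_id' ℝ A, cfc_const ..]

lemma re_inner_sub_algebraMap (A : H →L[ℂ] H) (t : ℝ) (x : H) :
    re ⟪(A - algebraMap ℝ (H →L[ℂ] H) t) x, x⟫_ℂ = re ⟪A x, x⟫_ℂ - t * ‖x‖ ^ 2 := by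
  have h : (algebraMap ℝ (H →L[ℂ] H) t) x = (t : ℝ) • x := by
    rw [Algebra.algebraMap_eq_smul_one]
    simp
  rw [ContinuousLinearMap.sub_apply, inner_sub_left, map_sub, h,
    ← algebraMap_smul ℂ t x, inner_smul_left]
  simp [inner_self_eq_norm_sq]
  left; norm_cast

lemma ker_le (A : H →L[ℂ] H) (hA : IsSelfAdjoint A) (t : ℝ) (x : H)
    (hx : aop A t x = 0) : re ⟪A x, x⟫_ℂ ≤ t * ‖x‖ ^ 2 := by
  have hn : (0:H →L[ℂ] H) ≤ cfc (fun r : ℝ => max (t - r) 0) A :=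
    cfc_nonneg fun r _ => le_max_right _ _
  have hn' := (ContinuousLinearMap.nonneg_iff_isPositive _).mp hn
  have h := aop_sub A hA t
  have h2 : re ⟪(A - algebraMap ℝ (H →L[ℂ] H) t) x, x⟫_ℂ ≤ 0 := by
    rw [← h]
    simp only [ContinuousLinearMap.sub_apply, hx, zero_sub, inner_neg_left, map_neg]
    simpa using hn'.re_inner_nonneg_left x
  rw [re_inner_sub_algebraMap] at h2
  linarith

lemma cfc_sub_alg (A : H →L[ℂ] H) (hA : IsSelfAdjoint A) (t : ℝ) :
    A - algebraMap ℝ (H →L[ℂ] H) t = cfc (fun r : ℝ => r - t) A := by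
  rw [cfc_sub .., cfc_id' ℝ A, cfc_const ..]

lemma aop_selfAdjoint (A : H →L[ℂ] H) (hA : IsSelfAdjoint A) (t : ℝ) :
    IsSelfAdjoint (aop A t) := cfc_predicate _ A

lemma aop_conj_nonneg (A : H →L[ℂ] H) (hA : IsSelfAdjoint A) (t : ℝ) :
    (0:H →L[ℂ] H) ≤ aop A t * ((A - algebraMap ℝ (H →L[ℂ] H) t) * aop A t) := by
  rw [cfc_sub_alg A hA t, aop, ← cfc_mul .., ← cfc_mul ..]
  apply cfc_nonneg
  intro r _
  rcases le_total r t with h | h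
  · simp [max_eq_right, sub_nonpos.2 h]
  · have h0 : (0:ℝ) ≤ r - t := sub_nonneg.2 h
    rw [max_eq_left h0]
    positivity

lemma orth_ge (A : H →L[ℂ] H) (hA : IsSelfAdjoint A) (t : ℝ) (x : H)
    (hx : x ∈ (aop A t).kerᗮ) : t * ‖x‖ ^ 2 ≤ re ⟪A x, x⟫_ℂ := by
  set s := aop A t with hs
  have hsa := aop_selfAdjoint A hA t
  have hsym : ∀ u v : H, ⟪s u, v⟫_ℂ = ⟪u, s v⟫_ℂ := fun u v =>
    (ContinuousLinearMap.isSelfAdjoint_iff_isSymmetric.mp hsa) u v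
  -- x in closure of range
  have hker : s.rangeᗮ = s.ker := by
    ext z
    rw [Submodule.mem_orthogonal, LinearMap.mem_ker, ContinuousLinearMap.coe_coe]
    constructor
    · intro h
      rw [← inner_self_eq_zero (𝕜 := ℂ) (x := s z)]
      have := h (s (s z)) ⟨s z, rfl⟩
      rwa [hsym (s z) z] at this
    · intro h u hu
      obtain ⟨w, rfl⟩ := hu
      rw [ContinuousLinearMap.coe_coe, hsym w z, h, inner_zero_right]
  have hcl : x ∈ closure ((s.range : Submodule ℂ H) : Set H) := by
    have h2 : s.kerᗮ = s.range.topologicalClosure := by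
      rw [← hker, Submodule.orthogonal_orthogonal_eq_closure]
    rw [← Submodule.topologicalClosure_coe, ← h2]
    exact hx
  -- quadratic form nonneg on range
  have hq : ∀ y ∈ ((s.range : Submodule ℂ H) : Set H),
      0 ≤ re ⟪(A - algebraMap ℝ (H →L[ℂ] H) t) y, y⟫_ℂ := by
    rintro y ⟨z, rfl⟩
    have hpos := (ContinuousLinearMap.nonneg_iff_isPositive _).mp (aop_conj_nonneg A hA t)
    have h3 := hpos.re_inner_nonneg_left z
    rwa [ContinuousLinearMap.mul_apply, ContinuousLinearMap.mul_apply,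
      hsym ((A - algebraMap ℝ (H →L[ℂ] H) t) (s z)) z] at h3
  -- pass to closure
  have hcont : Continuous fun y : H => re ⟪(A - algebraMap ℝ (H →L[ℂ] H) t) y, y⟫_ℂ :=
    RCLike.continuous_re.comp
      (Continuous.inner (A - algebraMap ℝ (H →L[ℂ] H) t).continuous continuous_id)
  have hclosed : IsClosed {y : H | 0 ≤ re ⟪(A - algebraMap ℝ (H →L[ℂ] H) t) y, y⟫_ℂ} :=
    isClosed_le continuous_const hcont
  have h0 : 0 ≤ re ⟪(A - algebraMap ℝ (H →L[ℂ] H) t) x, x⟫_ℂ :=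
    hclosed.closure_subset_iff.mpr hq hcl
  rw [re_inner_sub_algebraMap] at h0
  linarith

lemma aop_nonneg (A : H →L[ℂ] H) (hA : IsSelfAdjoint A) (t : ℝ) : (0:H →L[ℂ] H) ≤ aop A t :=
  cfc_nonneg fun r _ => le_max_right _ _

lemma aop_ker_mono (A : H →L[ℂ] H) (hA : IsSelfAdjoint A) {s t : ℝ} (hst : s ≤ t) (x : H)
    (hx : aop A s x = 0) : aop A t x = 0 := by
  set q : H →L[ℂ] H := cfc (fun r : ℝ => Real.sqrt (max (r - t) 0)) A with hq
  have hqq : q * q = aop A t := by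
    rw [hq, ← cfc_mul ..]
    exact cfc_congr fun r _ => Real.mul_self_sqrt (le_max_right _ _)
  have hqa : IsSelfAdjoint q := cfc_predicate _ A
  have hqsym : ∀ u v : H, ⟪q u, v⟫_ℂ = ⟪u, q v⟫_ℂ := fun u v =>
    (ContinuousLinearMap.isSelfAdjoint_iff_isSymmetric.mp hqa) u v
  have hmono : aop A t ≤ aop A s :=
    cfc_mono fun r _ => max_le_max (by linarith) le_rfl
  have h1 : re ⟪aop A t x, x⟫_ℂ ≤ 0 := by
    have hpos := (ContinuousLinearMap.le_def _ _).mp hmono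
    have h2 := hpos.re_inner_nonneg_left x
    rw [ContinuousLinearMap.sub_apply, hx, zero_sub, inner_neg_left, map_neg] at h2
    linarith
  have h0 : 0 ≤ re ⟪aop A t x, x⟫_ℂ := by
    exact ((ContinuousLinearMap.nonneg_iff_isPositive _).mp (aop_nonneg A hA t)).re_inner_nonneg_left x
  have hqx : q x = 0 := by
    have : re ⟪q x, q x⟫_ℂ = 0 := by
      rw [← hqsym (q x) x]
      have := congrArg (fun T : H →L[ℂ] H => re ⟪T x, x⟫_ℂ) hqq
      simp only [ContinuousLinearMap.mul_apply] at this
      rw [this]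
      linarith
    rwa [inner_self_eq_norm_sq, pow_eq_zero_iff (by norm_num), norm_eq_zero] at this
  rw [← hqq, ContinuousLinearMap.mul_apply, hqx, map_zero]

lemma aop_comm (A : H →L[ℂ] H) (hA : IsSelfAdjoint A) (t : ℝ) (x : H)
    (hx : aop A t x = 0) : aop A t (A x) = 0 := by
  have hcomm : A * aop A t = aop A t * A := by
    rw [aop]
    nth_rewrite 1 [← cfc_id' ℝ A]
    nth_rewrite 4 [← cfc_id' ℝ A]
    rw [← cfc_mul .., ← cfc_mul ..]
    exact cfc_congr fun r _ => mul_comm _ _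
  have := congrArg (fun T : H →L[ℂ] H => T x) hcomm
  simp only [ContinuousLinearMap.mul_apply, hx, map_zero] at this
  exact this.symm

lemma aop_top [Nontrivial H] (A : H →L[ℂ] H) (hA : IsSelfAdjoint A) (t : ℝ) (ht : ‖A‖ ≤ t) :
    aop A t = 0 := by
  have h : aop A t = cfc (fun _ : ℝ => (0:ℝ)) A := by
    apply cfc_congr
    intro r hr
    have h1 : |r| ≤ ‖A‖ := spectrum.norm_le_norm_of_mem hr
    have h2 := abs_le.mp h1
    simp only [max_eq_right_iff, sub_nonpos]
    linarith [h2.2]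
  rw [h, cfc_const ..]
  simp

noncomputable def projOf (K : Submodule ℂ H) (hK : IsClosed (K : Set H)) : H →L[ℂ] H :=
  haveI : CompleteSpace K := hK.completeSpace_coe
  K.subtypeL ∘L K.orthogonalProjectionOnto

lemma projOf_mem (K : Submodule ℂ H) (hK : IsClosed (K : Set H)) (x : H) :
    projOf K hK x ∈ K := SetLike.coe_mem _

lemma projOf_eq_self (K : Submodule ℂ H) (hK : IsClosed (K : Set H)) {x : H} (hx : x ∈ K) :
    projOf K hK x = x := by
  haveI : CompleteSpace K := hK.completeSpace_coe
  exact K.starProjection_eq_self_iff.mpr hx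

lemma projOf_isSelfAdjoint (K : Submodule ℂ H) (hK : IsClosed (K : Set H)) :
    IsSelfAdjoint (projOf K hK) := by
  haveI : CompleteSpace K := hK.completeSpace_coe
  exact isSelfAdjoint_starProjection K

lemma projOf_idem (K : Submodule ℂ H) (hK : IsClosed (K : Set H)) :
    IsIdempotentElem (projOf K hK) := by
  ext x
  rw [ContinuousLinearMap.mul_apply]
  exact projOf_eq_self K hK (projOf_mem K hK x)

lemma re_smul_inner (r : ℝ) (u v : H) : re ⟪r • u, v⟫_ℂ = r * re ⟪u, v⟫_ℂ := by
  rw [← algebraMap_smul ℂ r u, inner_smul_left]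
  simp

set_option maxHeartbeats 1000000 in
lemma approx [Nontrivial H] (A : H →L[ℂ] H) (hA : IsSelfAdjoint A) {δ : ℝ} (hδ : 0 < δ) :
    ∃ B ∈ (Submodule.span ℝ
      {P : H →L[ℂ] H | IsSelfAdjoint P ∧ IsIdempotentElem P} : Set (H →L[ℂ] H)),
      ‖A - B‖ ≤ δ := by
  set c := ‖A‖ with hc
  set n : ℕ := ⌈2 * c / δ⌉₊ + 1 with hn
  set τ : ℕ → ℝ := fun i => -c - δ + i * δ with hτ
  have hτmono : Monotone τ := by
    intro i j hij
    have h1 : (i:ℝ) ≤ j := Nat.cast_le.mpr hij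
    simp only [hτ]
    nlinarith
  have hτsucc : ∀ i : ℕ, τ (i + 1) = τ i + δ := by
    intro i
    simp only [hτ]
    push_cast
    ring
  have hτn : c ≤ τ n := by
    have h1 : 2 * c / δ ≤ (⌈2 * c / δ⌉₊ : ℝ) := Nat.le_ceil _
    rw [div_le_iff₀ hδ] at h1
    simp only [hτ, hn]
    push_cast
    nlinarith
  set K : ℕ → Submodule ℂ H := fun i => (aop A (τ i)).ker with hK
  have hKc : ∀ i, IsClosed ((K i : Set H)) := fun i =>
    ContinuousLinearMap.isClosed_ker (aop A (τ i))
  set P : ℕ → H →L[ℂ] H := fun i => projOf (K i) (hKc i) with hP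
  have hPmem : ∀ i (x : H), P i x ∈ K i := by
    intro i x
    simp only [hP]
    exact projOf_mem _ _ x
  have hPeq : ∀ i {x : H}, x ∈ K i → P i x = x := by
    intro i x hx
    simp only [hP]
    exact projOf_eq_self _ _ hx
  have hPsa : ∀ i, IsSelfAdjoint (P i) := by
    intro i
    simp only [hP]
    exact projOf_isSelfAdjoint _ _
  have hPidem : ∀ i, IsIdempotentElem (P i) := by
    intro i
    simp only [hP]
    exact projOf_idem _ _
  have hPsym : ∀ i (u v : H), ⟪P i u, v⟫_ℂ = ⟪u, P i v⟫_ℂ := fun i u v =>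
    (ContinuousLinearMap.isSelfAdjoint_iff_isSymmetric.mp (hPsa i)) u v
  have hAsym : ∀ u v : H, ⟪A u, v⟫_ℂ = ⟪u, A v⟫_ℂ := fun u v =>
    (ContinuousLinearMap.isSelfAdjoint_iff_isSymmetric.mp hA) u v
  have hKmono : ∀ i j, i ≤ j → K i ≤ K j := by
    intro i j hij x hx
    simp only [hK, LinearMap.mem_ker] at hx ⊢
    exact aop_ker_mono A hA (hτmono hij) x hx
  set B : H →L[ℂ] H := ∑ i ∈ Finset.range n, τ (i+1) • (P (i+1) - P i) with hB
  have hBsa : IsSelfAdjoint B := by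
    rw [hB]
    apply Finset.sum_induction _ IsSelfAdjoint (fun a b ha hb => ha.add hb) (by rw [IsSelfAdjoint, star_zero])
    intro i _
    rw [IsSelfAdjoint, star_smul, star_trivial, ((hPsa (i+1)).sub (hPsa i)).star_eq]
  refine ⟨B, ?_, ?_⟩
  · exact Submodule.sum_mem _ fun i _ => Submodule.smul_mem _ _
      (Submodule.sub_mem _ (Submodule.subset_span ⟨hPsa _, hPidem _⟩)
        (Submodule.subset_span ⟨hPsa _, hPidem _⟩))
  have key : ∀ x : H, 0 ≤ re ⟪(B - A) x, x⟫_ℂ ∧ re ⟪(B - A) x, x⟫_ℂ ≤ δ * ‖x‖^2 := by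
    intro x
    set y : ℕ → H := fun i => P (i+1) x - P i x with hy
    have hyK : ∀ i, y i ∈ K (i+1) := fun i =>
      Submodule.sub_mem _ (hPmem (i+1) x) (hKmono i (i+1) (Nat.le_succ i) (hPmem i x))
    have hyO : ∀ i, y i ∈ (K i)ᗮ := by
      intro i
      rw [Submodule.mem_orthogonal]
      intro u hu
      have hu' : u ∈ K (i+1) := hKmono i (i+1) (Nat.le_succ i) hu
      simp only [hy, inner_sub_right]
      rw [← hPsym (i+1) u x, ← hPsym i u x, hPeq (i+1) hu', hPeq i hu, sub_self]
    have horth : ∀ i j, i ≠ j → ⟪y i, y j⟫_ℂ = 0 := by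
      intro i j hij
      rcases lt_or_gt_of_ne hij with h | h
      · exact (Submodule.mem_orthogonal _ _).mp (hyO j) _ (hKmono (i+1) j h (hyK i))
      · rw [inner_eq_zero_symm]
        exact (Submodule.mem_orthogonal _ _).mp (hyO i) _ (hKmono (j+1) i h (hyK j))
    have hAyK : ∀ i, A (y i) ∈ K (i+1) := by
      intro i
      have h1 := hyK i
      simp only [hK, LinearMap.mem_ker] at h1 ⊢
      exact aop_comm A hA _ _ h1
    have hcross : ∀ i j, i ≠ j → ⟪A (y i), y j⟫_ℂ = 0 := by
      intro i j hij
      rcases lt_or_gt_of_ne hij with h | h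
      · exact (Submodule.mem_orthogonal _ _).mp (hyO j) _ (hKmono (i+1) j h (hAyK i))
      · rw [hAsym, inner_eq_zero_symm]
        exact (Submodule.mem_orthogonal _ _).mp (hyO i) _ (hKmono (j+1) i h (hAyK j))
    have hsum : ∑ i ∈ Finset.range n, y i = x := by
      have ht : ∑ i ∈ Finset.range n, y i = P n x - P 0 x := by
        simp only [hy]
        exact Finset.sum_range_sub (fun i => P i x) n
      have hPn : P n x = x := by
        apply hPeq n
        simp only [hK, LinearMap.mem_ker]
        rw [aop_top A hA (τ n) hτn]
        rfl
      have hP0 : P 0 x = 0 := by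
        have hmem := hPmem 0 x
        set z := P 0 x with hz
        simp only [hK, LinearMap.mem_ker] at hmem
        have hle := ker_le A hA (τ 0) z hmem
        have h1 : ‖⟪A z, z⟫_ℂ‖ ≤ ‖A z‖ * ‖z‖ := norm_inner_le_norm _ _
        have h2 : ‖A z‖ ≤ c * ‖z‖ := A.le_opNorm z
        have h3 : |re ⟪A z, z⟫_ℂ| ≤ ‖⟪A z, z⟫_ℂ‖ := abs_re_le_norm _
        have hτ0 : τ 0 = -c - δ := by simp [hτ]
        have h4 : ‖z‖^2 = 0 := by nlinarith [norm_nonneg z, abs_le.mp h3, norm_nonneg (A z)]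
        have h5 : ‖z‖ = 0 := by
          rw [pow_eq_zero_iff (two_ne_zero)] at h4
          exact h4
        exact norm_eq_zero.mp h5
      rw [ht, hPn, hP0, sub_zero]
    have hyx : ∀ i ∈ Finset.range n, ⟪y i, x⟫_ℂ = (‖y i‖:ℂ)^2 := by
      intro i hi
      conv_lhs => rw [← hsum]
      rw [inner_sum, Finset.sum_eq_single i (fun j _ hj => horth i j (Ne.symm hj))
        (fun h => absurd hi h)]
      exact inner_self_eq_norm_sq_to_K (𝕜 := ℂ) (y i)
    have hBx : re ⟪B x, x⟫_ℂ = ∑ i ∈ Finset.range n, τ (i+1) * ‖y i‖^2 := by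
      have h1 : B x = ∑ i ∈ Finset.range n, τ (i+1) • y i := by
        rw [hB, ContinuousLinearMap.sum_apply]
        exact Finset.sum_congr rfl fun i _ => by
          simp [hy, ContinuousLinearMap.smul_apply, ContinuousLinearMap.sub_apply]
      rw [h1, sum_inner, map_sum]
      refine Finset.sum_congr rfl fun i hi => ?_
      rw [re_smul_inner, hyx i hi]
      norm_cast
    have hAx : re ⟪A x, x⟫_ℂ = ∑ i ∈ Finset.range n, re ⟪A (y i), y i⟫_ℂ := by
      conv_lhs => rw [← hsum]
      rw [map_sum, sum_inner, map_sum]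
      refine Finset.sum_congr rfl fun i hi => ?_
      congr 1
      rw [inner_sum, Finset.sum_eq_single i (fun j _ hj => hcross i j (Ne.symm hj))
        (fun h => absurd hi h)]
    have hnx : ‖x‖^2 = ∑ i ∈ Finset.range n, ‖y i‖^2 := by
      have h0 : re ⟪x, x⟫_ℂ = ∑ i ∈ Finset.range n, ‖y i‖^2 := by
        conv_lhs => rw [← hsum]
        rw [sum_inner, map_sum]
        refine Finset.sum_congr rfl fun i hi => ?_
        rw [hsum, hyx i hi]
        norm_cast
      rw [← h0, inner_self_eq_norm_sq (𝕜 := ℂ) x]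
    have hterm_le : ∀ i, re ⟪A (y i), y i⟫_ℂ ≤ τ (i+1) * ‖y i‖^2 := by
      intro i
      have h1 := hyK i
      simp only [hK, LinearMap.mem_ker] at h1
      exact ker_le A hA (τ (i+1)) (y i) h1
    have hterm_ge : ∀ i, τ (i+1) * ‖y i‖^2 - δ * ‖y i‖^2 ≤ re ⟪A (y i), y i⟫_ℂ := by
      intro i
      have h1 := orth_ge A hA (τ i) (y i) (hyO i)
      rw [hτsucc i]
      nlinarith [sq_nonneg (‖y i‖)]
    have hre : re ⟪(B - A) x, x⟫_ℂ =
        ∑ i ∈ Finset.range n, (τ (i+1) * ‖y i‖^2 - re ⟪A (y i), y i⟫_ℂ) := by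
      rw [ContinuousLinearMap.sub_apply, inner_sub_left, map_sub, hBx, hAx,
        Finset.sum_sub_distrib]
    constructor
    · rw [hre]
      exact Finset.sum_nonneg fun i _ => by linarith [hterm_le i]
    · rw [hre, hnx, Finset.mul_sum]
      exact Finset.sum_le_sum fun i _ => by linarith [hterm_ge i]
  have hTnn : (0:H →L[ℂ] H) ≤ B - A := by
    rw [ContinuousLinearMap.nonneg_iff_isPositive]
    exact ⟨ContinuousLinearMap.isSelfAdjoint_iff_isSymmetric.mp (hBsa.sub hA), fun x => (key x).1⟩
  have hCsa : IsSelfAdjoint (algebraMap ℝ (H →L[ℂ] H) δ) := by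
    rw [Algebra.algebraMap_eq_smul_one, IsSelfAdjoint, star_smul, star_trivial, star_one]
  have hTle : B - A ≤ algebraMap ℝ (H →L[ℂ] H) δ := by
    rw [ContinuousLinearMap.le_def]
    refine ⟨ContinuousLinearMap.isSelfAdjoint_iff_isSymmetric.mp (hCsa.sub (hBsa.sub hA)), fun x => ?_⟩
    have h1 : re ⟪(algebraMap ℝ (H →L[ℂ] H) δ - (B - A)) x, x⟫_ℂ =
        -(re ⟪((B - A) - algebraMap ℝ (H →L[ℂ] H) δ) x, x⟫_ℂ) := by
      rw [← neg_sub ((B - A)) (algebraMap ℝ (H →L[ℂ] H) δ), ContinuousLinearMap.neg_apply,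
        inner_neg_left, map_neg]
    rw [ContinuousLinearMap.reApplyInnerSelf_apply, h1, re_inner_sub_algebraMap]
    linarith [(key x).2]
  have hnorm : ‖B - A‖ ≤ δ :=
    calc ‖B - A‖ ≤ ‖algebraMap ℝ (H →L[ℂ] H) δ‖ :=
          CStarAlgebra.norm_le_norm_of_nonneg_of_le hTnn hTle
    _ = δ := by
        rw [Algebra.algebraMap_eq_smul_one, norm_smul, norm_one]
        simp [abs_of_nonneg hδ.le]
  rwa [← norm_neg, neg_sub]

end ProjectionSpanAux

variable {H : Type*} [NormedAddCommGroup H] [InnerProductSpace ℂ H] [CompleteSpace H]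

/-- If `dim H ≥ 2`, every bounded self-adjoint operator lies in the norm
closure of the real linear span of the orthogonal projections. -/
theorem selfAdjoint_mem_closure_span_projections
    (hdim : 2 ≤ Module.rank ℂ H)
    (A : H →L[ℂ] H) (hA : IsSelfAdjoint A) :
    A ∈ closure (Submodule.span ℝ
      {P : H →L[ℂ] H | IsSelfAdjoint P ∧ IsIdempotentElem P} : Set (H →L[ℂ] H)) := by
  haveI hnt : Nontrivial H := by
    rw [← rank_pos_iff_nontrivial (R := ℂ)]
    exact lt_of_lt_of_le (by norm_num) hdim
  rw [Metric.mem_closure_iff]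
  intro ε hε
  obtain ⟨B, hB1, hB2⟩ := ProjectionSpanAux.approx A hA (show (0:ℝ) < ε/2 by positivity)
  exact ⟨B, hB1, by rw [dist_eq_norm]; linarith⟩
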